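/- Consider a single-head attention output u'(D) = Σ_{j=1}^n a_j W V_j, where a_j = softmax(v^T W_q V_1, …, v^T W_q V_n)_j, the inputs satisfy ‖V_j‖ ≤ K, ‖v‖ ≤ K, and ‖W‖, ‖W_q‖ ≤ 1 (operator norms). If D and D̃ differ only in the n-th sample V_n (with ‖Ṽ_n‖ ≤ K), then ‖u'(D) − u'(D̃)‖ ≤ C(K)/n for a constant C(K) depending only on K (e.g., C(K) = 8 e^{4K²} K). -/

import Mathlib

open RealInnerProductSpace

noncomputable section

/-- Single-head attention output `u'(V) = Σ_j a_j W V_j` with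
`a_j = softmax(⟪v, W_q V_1⟫, …, ⟪v, W_q V_n⟫)_j`. -/
def attention {d n : ℕ} (W Wq : EuclideanSpace ℝ (Fin d) →L[ℝ] EuclideanSpace ℝ (Fin d))
    (v : EuclideanSpace ℝ (Fin d)) (V : Fin n → EuclideanSpace ℝ (Fin d)) :
    EuclideanSpace ℝ (Fin d) :=
  ∑ j, (Real.exp ⟪v, Wq (V j)⟫ / ∑ i, Real.exp ⟪v, Wq (V i)⟫) • W (V j)

set_option maxHeartbeats 1000000 in
/-- Changing one sample of bounded norm changes the single-head attention
output by at most `8 e^{4K²} K / n`. -/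
theorem attention_bounded_difference {d n : ℕ} (hn : 0 < n) (K : ℝ) (hK : 0 ≤ K)
    (W Wq : EuclideanSpace ℝ (Fin d) →L[ℝ] EuclideanSpace ℝ (Fin d))
    (hW : ‖W‖ ≤ 1) (hWq : ‖Wq‖ ≤ 1)
    (v : EuclideanSpace ℝ (Fin d)) (hv : ‖v‖ ≤ K)
    (V V' : Fin n → EuclideanSpace ℝ (Fin d))
    (hV : ∀ j, ‖V j‖ ≤ K) (hV' : ∀ j, ‖V' j‖ ≤ K)
    (i₀ : Fin n) (hdiff : ∀ j, j ≠ i₀ → V j = V' j) :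
    ‖attention W Wq v V - attention W Wq v V'‖
      ≤ 8 * Real.exp (4 * K ^ 2) * K / n := by
  set E := Real.exp (K ^ 2) with hEdef
  have hEpos : 0 < E := Real.exp_pos _
  have hnpos : (0:ℝ) < n := by exact_mod_cast hn
  -- score bounds
  have hscore : ∀ (U : Fin n → EuclideanSpace ℝ (Fin d)), (∀ j, ‖U j‖ ≤ K) →
      ∀ j, E⁻¹ ≤ Real.exp ⟪v, Wq (U j)⟫ ∧ Real.exp ⟪v, Wq (U j)⟫ ≤ E := by
    intro U hU j
    have h2 : ‖Wq (U j)‖ ≤ 1 * K :=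
      le_trans (Wq.le_opNorm _) (mul_le_mul hWq (hU j) (norm_nonneg _) zero_le_one)
    have h1 : |⟪v, Wq (U j)⟫| ≤ K ^ 2 := by
      calc |⟪v, Wq (U j)⟫| ≤ ‖v‖ * ‖Wq (U j)‖ := abs_real_inner_le_norm _ _
        _ ≤ K * (1 * K) := mul_le_mul hv h2 (norm_nonneg _) hK
        _ = K ^ 2 := by ring
    constructor
    · rw [← Real.exp_neg]
      exact Real.exp_le_exp.2 (neg_le_of_abs_le h1)
    · exact Real.exp_le_exp.2 (le_of_abs_le h1)
  -- bounds on W-images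
  have hWV : ∀ j, ‖W (V j)‖ ≤ K := by
    intro j
    have h := mul_le_mul hW (hV j) (norm_nonneg _) zero_le_one
    have := W.le_opNorm (V j)
    linarith
  have hWV' : ∀ j, ‖W (V' j)‖ ≤ K := by
    intro j
    have h := mul_le_mul hW (hV' j) (norm_nonneg _) zero_le_one
    have := W.le_opNorm (V' j)
    linarith
  set S := ∑ i, Real.exp ⟪v, Wq (V i)⟫ with hSdef
  set T := ∑ i, Real.exp ⟪v, Wq (V' i)⟫ with hTdef
  have hSlb : (n:ℝ) * E⁻¹ ≤ S := by
    calc (n:ℝ) * E⁻¹ = ∑ _i : Fin n, E⁻¹ := by simp [mul_comm]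
      _ ≤ S := Finset.sum_le_sum fun i _ => (hscore V hV i).1
  have hTlb : (n:ℝ) * E⁻¹ ≤ T := by
    calc (n:ℝ) * E⁻¹ = ∑ _i : Fin n, E⁻¹ := by simp [mul_comm]
      _ ≤ T := Finset.sum_le_sum fun i _ => (hscore V' hV' i).1
  have hSpos : 0 < S := lt_of_lt_of_le (by positivity) hSlb
  have hTpos : 0 < T := lt_of_lt_of_le (by positivity) hTlb
  have key : ∀ x SS : ℝ, x ≤ E → (n:ℝ) * E⁻¹ ≤ SS → 0 ≤ x → x / SS ≤ E ^ 2 / n := by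
    intro x SS hx hSS hx0
    have hSSpos : 0 < SS := lt_of_lt_of_le (by positivity) hSS
    calc x / SS ≤ E / ((n:ℝ) * E⁻¹) := div_le_div₀ hEpos.le hx (by positivity) hSS
      _ = E ^ 2 / n := by field_simp
  set q : ℝ := |T - S| / (S * T) with hqdef
  have hq0 : 0 ≤ q := div_nonneg (abs_nonneg _) (mul_pos hSpos hTpos).le
  -- abbreviate the summand difference
  obtain ⟨f, hfdef⟩ : ∃ f : Fin n → EuclideanSpace ℝ (Fin d), f = fun j =>
      (Real.exp ⟪v, Wq (V j)⟫ / S) • W (V j)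
        - (Real.exp ⟪v, Wq (V' j)⟫ / T) • W (V' j) := ⟨_, rfl⟩
  -- bound for the changed index
  have hterm0 : ‖f i₀‖ ≤ K * (2 * E ^ 2 / n) := by
    have ha : 0 ≤ Real.exp ⟪v, Wq (V i₀)⟫ / S :=
      div_nonneg (Real.exp_pos _).le hSpos.le
    have hb : 0 ≤ Real.exp ⟪v, Wq (V' i₀)⟫ / T :=
      div_nonneg (Real.exp_pos _).le hTpos.le
    have hka := key (Real.exp ⟪v, Wq (V i₀)⟫) S (hscore V hV i₀).2 hSlb (Real.exp_pos _).le
    have hkb := key (Real.exp ⟪v, Wq (V' i₀)⟫) T (hscore V' hV' i₀).2 hTlb (Real.exp_pos _).le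
    rw [congrFun hfdef i₀]
    calc ‖(Real.exp ⟪v, Wq (V i₀)⟫ / S) • W (V i₀)
          - (Real.exp ⟪v, Wq (V' i₀)⟫ / T) • W (V' i₀)‖
        ≤ ‖(Real.exp ⟪v, Wq (V i₀)⟫ / S) • W (V i₀)‖
          + ‖(Real.exp ⟪v, Wq (V' i₀)⟫ / T) • W (V' i₀)‖ := norm_sub_le _ _
      _ = (Real.exp ⟪v, Wq (V i₀)⟫ / S) * ‖W (V i₀)‖
          + (Real.exp ⟪v, Wq (V' i₀)⟫ / T) * ‖W (V' i₀)‖ := by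
          rw [norm_smul, norm_smul, Real.norm_eq_abs, Real.norm_eq_abs,
            abs_of_nonneg ha, abs_of_nonneg hb]
      _ ≤ (E ^ 2 / n) * K + (E ^ 2 / n) * K := by
          have h1 := hWV i₀
          have h2 := hWV' i₀
          have hEn : 0 ≤ E ^ 2 / n := div_nonneg (sq_nonneg E) hnpos.le
          have h3 := mul_le_mul hka h1 (norm_nonneg _) hEn
          have h4 := mul_le_mul hkb h2 (norm_nonneg _) hEn
          linarith
      _ = K * (2 * E ^ 2 / n) := by ring
  -- bound for unchanged indices
  have hterm : ∀ j : Fin n, j ≠ i₀ → ‖f j‖ ≤ K * (Real.exp ⟪v, Wq (V j)⟫ * q) := by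
    intro j hj
    have hVj : V' j = V j := (hdiff j hj).symm
    set e := Real.exp ⟪v, Wq (V j)⟫ with hedef
    have hepos : 0 < e := Real.exp_pos _
    have hfj0 : f j = (Real.exp ⟪v, Wq (V j)⟫ / S) • W (V j)
        - (Real.exp ⟪v, Wq (V' j)⟫ / T) • W (V' j) := congrFun hfdef j
    have hfj : f j = (e / S - e / T) • W (V j) := by
      rw [hfj0, hVj, ← hedef, ← sub_smul]
    have hsplit : e / S - e / T = e * (T - S) / (S * T) := by
      rw [div_sub_div _ _ hSpos.ne' hTpos.ne']
      congr 1
      ring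
    calc ‖f j‖ = |e / S - e / T| * ‖W (V j)‖ := by
          rw [hfj, norm_smul, Real.norm_eq_abs]
      _ = (e * |T - S| / (S * T)) * ‖W (V j)‖ := by
          rw [hsplit, abs_div, abs_mul, abs_of_pos hepos,
            abs_of_pos (mul_pos hSpos hTpos)]
      _ ≤ (e * |T - S| / (S * T)) * K := by
          have := hWV j
          have h0 : 0 ≤ e * |T - S| / (S * T) :=
            div_nonneg (mul_nonneg hepos.le (abs_nonneg _)) (mul_pos hSpos hTpos).le
          exact mul_le_mul_of_nonneg_left this h0
      _ = K * (e * q) := by rw [hqdef]; ring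
  -- |T - S| ≤ E
  have hTS : |T - S| ≤ E := by
    have hsum : T - S = Real.exp ⟪v, Wq (V' i₀)⟫ - Real.exp ⟪v, Wq (V i₀)⟫ := by
      rw [hTdef, hSdef, ← Finset.sum_sub_distrib]
      rw [Finset.sum_eq_single i₀]
      · intro b _ hb
        rw [hdiff b hb, sub_self]
      · intro h; exact absurd (Finset.mem_univ i₀) h
    rw [hsum]
    have h1 := (hscore V hV i₀).2
    have h2 := (hscore V' hV' i₀).2
    have h3 := (Real.exp_pos ⟪v, Wq (V i₀)⟫).le
    have h4 := (Real.exp_pos ⟪v, Wq (V' i₀)⟫).le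
    rw [abs_sub_le_iff]
    constructor <;> linarith
  -- sum over the unchanged indices
  have hrest : ∑ j ∈ ({i₀}ᶜ : Finset (Fin n)), K * (Real.exp ⟪v, Wq (V j)⟫ * q)
      ≤ K * (E ^ 2 / n) := by
    have hsle : ∑ j ∈ ({i₀}ᶜ : Finset (Fin n)), Real.exp ⟪v, Wq (V j)⟫ ≤ S :=
      Finset.sum_le_sum_of_subset_of_nonneg (Finset.subset_univ _)
        (fun i _ _ => (Real.exp_pos _).le)
    have hsnn : 0 ≤ ∑ j ∈ ({i₀}ᶜ : Finset (Fin n)), Real.exp ⟪v, Wq (V j)⟫ :=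
      Finset.sum_nonneg fun i _ => (Real.exp_pos _).le
    have step : (∑ j ∈ ({i₀}ᶜ : Finset (Fin n)), Real.exp ⟪v, Wq (V j)⟫) * q
        ≤ E ^ 2 / n := by
      calc (∑ j ∈ ({i₀}ᶜ : Finset (Fin n)), Real.exp ⟪v, Wq (V j)⟫) * q
          ≤ S * q := mul_le_mul_of_nonneg_right hsle hq0
        _ = |T - S| / T := by
            rw [hqdef, mul_div_assoc', mul_div_mul_left _ _ hSpos.ne']
        _ ≤ E / ((n:ℝ) * E⁻¹) := div_le_div₀ hEpos.le hTS (by positivity) hTlb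
        _ = E ^ 2 / n := by rw [← div_eq_mul_inv, div_div_eq_mul_div, ← sq]
    calc ∑ j ∈ ({i₀}ᶜ : Finset (Fin n)), K * (Real.exp ⟪v, Wq (V j)⟫ * q)
        = K * ((∑ j ∈ ({i₀}ᶜ : Finset (Fin n)), Real.exp ⟪v, Wq (V j)⟫) * q) := by
          rw [← Finset.mul_sum, ← Finset.sum_mul]
      _ ≤ K * (E ^ 2 / n) := mul_le_mul_of_nonneg_left step hK
  have hE2 : E ^ 2 ≤ Real.exp (4 * K ^ 2) := by
    rw [hEdef, sq, ← Real.exp_add]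
    exact Real.exp_le_exp.2 (by nlinarith)
  calc ‖attention W Wq v V - attention W Wq v V'‖
      = ‖∑ j, f j‖ := by
        rw [attention, attention, ← Finset.sum_sub_distrib, hfdef]
    _ ≤ ∑ j, ‖f j‖ := norm_sum_le _ _
    _ = ‖f i₀‖ + ∑ j ∈ ({i₀}ᶜ : Finset (Fin n)), ‖f j‖ :=
        Fintype.sum_eq_add_sum_compl i₀ _
    _ ≤ K * (2 * E ^ 2 / n)
        + ∑ j ∈ ({i₀}ᶜ : Finset (Fin n)), K * (Real.exp ⟪v, Wq (V j)⟫ * q) := by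
        refine add_le_add hterm0 (Finset.sum_le_sum fun j hj => ?_)
        simp only [Finset.mem_compl, Finset.mem_singleton] at hj
        exact hterm j hj
    _ ≤ K * (2 * E ^ 2 / n) + K * (E ^ 2 / n) := add_le_add_right hrest _
    _ = 3 * E ^ 2 * K / n := by ring
    _ ≤ 8 * Real.exp (4 * K ^ 2) * K / n := by
        rw [div_le_div_iff₀ hnpos hnpos]
        have h1 : K * E ^ 2 * n ≤ K * Real.exp (4 * K ^ 2) * n :=
          mul_le_mul_of_nonneg_right (mul_le_mul_of_nonneg_left hE2 hK) hnpos.le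
        have h2 : 0 ≤ K * Real.exp (4 * K ^ 2) * n := by positivity
        nlinarith [h1, h2]

end
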